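/- Suppose the DM-TWC satisfies condition (a) and condition (b2), and suppose P*_{X₁}(x₁) > 0 for all x₁ ∈ 𝒳₁. Then there exists a distribution P*_{X₂} on 𝒳₂ that is a common conditional output entropy maximizer: for every x₁ ∈ 𝒳₁, P*_{X₂} maximizes P ↦ H(Σ_{x₂} P(x₂)·P_{Y₁|X₁,X₂}(·|x₁,x₂)) over all distributions P on 𝒳₂. -/

import Mathlib

open scoped BigOperators

/-- `P` is a probability distribution on the finite alphabet `A`. -/
def IsDist {A : Type*} [Fintype A] (P : A → ℝ) : Prop :=
  (∀ a, 0 ≤ P a) ∧ ∑ a, P a = 1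

/-- Input–output mutual information 𝓘(P, W) (in bits) of a channel `W`
from the finite alphabet `A` to the finite alphabet `B` under input distribution `P`. -/
noncomputable def mutInfo {A B : Type*} [Fintype A] [Fintype B]
    (P : A → ℝ) (W : A → B → ℝ) : ℝ :=
  ∑ a, ∑ b, P a * W a b * Real.logb 2 (W a b / ∑ a', P a' * W a' b)

/-- Shannon entropy (base 2) of a distribution on a finite alphabet. -/
noncomputable def ent {B : Type*} [Fintype B] (Q : B → ℝ) : ℝ :=
  -∑ b, Q b * Real.logb 2 (Q b)

section TWC

variable {X1 X2 Y1 Y2 : Type*} [Fintype X1] [Fintype X2] [Fintype Y1] [Fintype Y2]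

/-- A joint input distribution on `X1 × X2`. -/
def IsJointDist (P : X1 → X2 → ℝ) : Prop :=
  (∀ x1 x2, 0 ≤ P x1 x2) ∧ ∑ x1, ∑ x2, P x1 x2 = 1

/-- Marginal of a joint input distribution on `X1`. -/
noncomputable def margin1 (P : X1 → X2 → ℝ) (x1 : X1) : ℝ := ∑ x2, P x1 x2

/-- Marginal of a joint input distribution on `X2`. -/
noncomputable def margin2 (P : X1 → X2 → ℝ) (x2 : X2) : ℝ := ∑ x1, P x1 x2

/-- Conditional distribution P_{X₁|X₂=x₂}. -/
noncomputable def cond1given2 (P : X1 → X2 → ℝ) (x2 : X2) (x1 : X1) : ℝ :=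
  P x1 x2 / margin2 P x2

/-- Conditional distribution P_{X₂|X₁=x₁}. -/
noncomputable def cond2given1 (P : X1 → X2 → ℝ) (x1 : X1) (x2 : X2) : ℝ :=
  P x1 x2 / margin1 P x1

/-- The conditional mutual information I(X₁;Y₂|X₂) under the joint input distribution `P`,
where `W2` is the marginal channel P_{Y₂|X₁,X₂}. -/
noncomputable def condMI12 (P : X1 → X2 → ℝ) (W2 : X1 → X2 → Y2 → ℝ) : ℝ :=
  ∑ x2, margin2 P x2 * mutInfo (cond1given2 P x2) (fun x1 => W2 x1 x2)

/-- The conditional mutual information I(X₂;Y₁|X₁) under the joint input distribution `P`,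
where `W1` is the marginal channel P_{Y₁|X₁,X₂}. -/
noncomputable def condMI21 (P : X1 → X2 → ℝ) (W1 : X1 → X2 → Y1 → ℝ) : ℝ :=
  ∑ x1, margin1 P x1 * mutInfo (cond2given1 P x1) (fun x2 => W1 x1 x2)

/-- The rate region 𝓡(P_{X₁,X₂}). -/
noncomputable def rateRegion (W1 : X1 → X2 → Y1 → ℝ) (W2 : X1 → X2 → Y2 → ℝ)
    (P : X1 → X2 → ℝ) : Set (ℝ × ℝ) :=
  {r | 0 ≤ r.1 ∧ r.1 ≤ condMI12 P W2 ∧ 0 ≤ r.2 ∧ r.2 ≤ condMI21 P W1}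

/-- Shannon's inner bound C_I: the closure of the convex hull of the union of the
rate regions of all product input distributions. -/
noncomputable def innerBound (W1 : X1 → X2 → Y1 → ℝ) (W2 : X1 → X2 → Y2 → ℝ) :
    Set (ℝ × ℝ) :=
  closure (convexHull ℝ
    (⋃ P ∈ {P : X1 → X2 → ℝ |
        ∃ P1 P2, IsDist P1 ∧ IsDist P2 ∧ P = fun x1 x2 => P1 x1 * P2 x2},
      rateRegion W1 W2 P))

/-- Shannon's outer bound C_O: the union of the rate regions of all joint input
distributions. -/
noncomputable def outerBound (W1 : X1 → X2 → Y1 → ℝ) (W2 : X1 → X2 → Y2 → ℝ) :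
    Set (ℝ × ℝ) :=
  ⋃ P ∈ {P : X1 → X2 → ℝ | IsJointDist P}, rateRegion W1 W2 P

/-- The largest input–output mutual information of the one-way channel
P_{Y₂|X₁,X₂=x₂}. -/
noncomputable def capAt (W2 : X1 → X2 → Y2 → ℝ) (x2 : X2) : ℝ :=
  sSup {I | ∃ P : X1 → ℝ, IsDist P ∧ I = mutInfo P (fun x1 => W2 x1 x2)}

/-- α*: how close the channels {P_{Y₂|X₁,X₂=x₂}} are to having a common optimal
input distribution. -/
noncomputable def alphaStar (W2 : X1 → X2 → Y2 → ℝ) : ℝ :=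
  sInf {a | ∃ Pt : X1 → ℝ, IsDist Pt ∧
    a = ⨆ x2, |mutInfo Pt (fun x1 => W2 x1 x2) - capAt W2 x2|}

/-- β*: the degree of invariance in the input–output mutual information of the
channels {P_{Y₁|X₁=x₁,X₂}}. -/
noncomputable def betaStar (W1 : X1 → X2 → Y1 → ℝ) : ℝ :=
  sSup {b | ∃ (P : X2 → ℝ) (x1 x1' : X1), IsDist P ∧ x1 ≠ x1' ∧
    b = |mutInfo P (fun x2 => W1 x1 x2) - mutInfo P (fun x2 => W1 x1' x2)|}

/-- I*₁ = max_{x₂} max_{P} 𝓘(P, P_{Y₂|X₁,X₂=x₂}). -/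
noncomputable def IStar1 (W2 : X1 → X2 → Y2 → ℝ) : ℝ :=
  sSup {I | ∃ (x2 : X2) (P : X1 → ℝ), IsDist P ∧ I = mutInfo P (fun x1 => W2 x1 x2)}

/-- I*₂ = max_{x₁} max_{P} 𝓘(P, P_{Y₁|X₁=x₁,X₂}). -/
noncomputable def IStar2 (W1 : X1 → X2 → Y1 → ℝ) : ℝ :=
  sSup {I | ∃ (x1 : X1) (P : X2 → ℝ), IsDist P ∧ I = mutInfo P (fun x2 => W1 x1 x2)}

/-- Condition (a): `Pstar` is a common optimal input distribution for the channels
{P_{Y₂|X₁,X₂=x₂} : x₂ ∈ 𝒳₂}. -/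
def CondA (W2 : X1 → X2 → Y2 → ℝ) (Pstar : X1 → ℝ) : Prop :=
  IsDist Pstar ∧ ∀ x2 : X2, ∀ P : X1 → ℝ, IsDist P →
    mutInfo P (fun x1 => W2 x1 x2) ≤ mutInfo Pstar (fun x1 => W2 x1 x2)

/-- Condition (b1): for every input distribution on 𝒳₂, the input–output mutual
information of P_{Y₁|X₁=x₁,X₂} does not depend on x₁. -/
def CondB1 (W1 : X1 → X2 → Y1 → ℝ) : Prop :=
  ∀ P : X2 → ℝ, IsDist P → ∀ x1 x1' : X1,
    mutInfo P (fun x2 => W1 x1 x2) = mutInfo P (fun x2 => W1 x1' x2)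

/-- H(Y₁|X₁,X₂) under the joint input distribution `P`. -/
noncomputable def condEntFull (P : X1 → X2 → ℝ) (W1 : X1 → X2 → Y1 → ℝ) : ℝ :=
  ∑ x1, ∑ x2, P x1 x2 * ent (W1 x1 x2)

/-- H(Y₁|X₁) under the joint input distribution `P`. -/
noncomputable def condEntY1X1 (P : X1 → X2 → ℝ) (W1 : X1 → X2 → Y1 → ℝ) : ℝ :=
  ∑ x1, margin1 P x1 * ent (fun y1 => ∑ x2, cond2given1 P x1 x2 * W1 x1 x2 y1)

/-- Condition (b2), part (i): H(Y₁|X₁,X₂) depends on the joint input distribution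
only through its marginal on 𝒳₂. -/
def CondB2i (W1 : X1 → X2 → Y1 → ℝ) : Prop :=
  ∀ P Q : X1 → X2 → ℝ, IsJointDist P → IsJointDist Q →
    margin2 P = margin2 Q → condEntFull P W1 = condEntFull Q W1

/-- Condition (b2), part (ii), relative to the common optimal input `Pstar`:
H⁽¹⁾(Y₁|X₁) ≤ H⁽²⁾(Y₁|X₁) where P⁽²⁾ = P*_{X₁}·P⁽¹⁾_{X₂}. -/
def CondB2ii (W1 : X1 → X2 → Y1 → ℝ) (Pstar : X1 → ℝ) : Prop :=
  ∀ P : X1 → X2 → ℝ, IsJointDist P →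
    condEntY1X1 P W1 ≤ condEntY1X1 (fun x1 x2 => Pstar x1 * margin2 P x2) W1


lemma condEntY1X1_factored (W1 : X1 → X2 → Y1 → ℝ) (Pstar : X1 → ℝ)
    (hpos : ∀ x1, Pstar x1 ≠ 0) (c : X1 → X2 → ℝ) (hc : ∀ x1, ∑ x2, c x1 x2 = 1) :
    condEntY1X1 (fun x1 x2 => Pstar x1 * c x1 x2) W1 =
      ∑ x1, Pstar x1 * ent (fun y1 => ∑ x2, c x1 x2 * W1 x1 x2 y1) := by
  unfold condEntY1X1 cond2given1 margin1
  refine Finset.sum_congr rfl fun a _ => ?_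
  have h1 : ∑ x2, Pstar a * c a x2 = Pstar a := by
    rw [← Finset.mul_sum, hc a, mul_one]
  rw [h1]
  congr 2
  funext y1
  refine Finset.sum_congr rfl fun b _ => ?_
  rw [mul_div_cancel_left₀ (c a b) (hpos a)]

lemma ent_mix_continuous (W1 : X1 → X2 → Y1 → ℝ) (x1 : X1) :
    Continuous fun (P : X2 → ℝ) => ent (fun y1 => ∑ x2, P x2 * W1 x1 x2 y1) := by
  unfold ent
  apply Continuous.neg
  apply continuous_finset_sum
  intro y1 _
  have hq : Continuous fun (P : X2 → ℝ) => ∑ x2, P x2 * W1 x1 x2 y1 :=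
    continuous_finset_sum _ fun x2 _ => (continuous_apply x2).mul continuous_const
  have hml : Continuous fun t : ℝ => t * Real.logb 2 t := by
    have h : (fun t : ℝ => t * Real.logb 2 t) = fun t => (t * Real.log t) / Real.log 2 := by
      funext t; rw [Real.logb, mul_div_assoc]
    rw [h]
    exact Real.continuous_mul_log.div_const _
  exact hml.comp hq

/-- under conditions (a) and (b2), with P*_{X₁} strictly positive, there is
a common conditional output entropy maximizer P*_{X₂}. -/
theorem stmt2 [Nonempty X1] [Nonempty X2]
    (W1 : X1 → X2 → Y1 → ℝ) (W2 : X1 → X2 → Y2 → ℝ)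
    (hW1 : ∀ x1 x2, IsDist (W1 x1 x2)) (hW2 : ∀ x1 x2, IsDist (W2 x1 x2))
    (Pstar : X1 → ℝ) (ha : CondA W2 Pstar)
    (hb2i : CondB2i W1) (hb2ii : CondB2ii W1 Pstar)
    (hpos : ∀ x1, 0 < Pstar x1) :
    ∃ Pstar2 : X2 → ℝ, IsDist Pstar2 ∧
      ∀ x1 : X1, ∀ P : X2 → ℝ, IsDist P →
        ent (fun y1 => ∑ x2, P x2 * W1 x1 x2 y1) ≤
          ent (fun y1 => ∑ x2, Pstar2 x2 * W1 x1 x2 y1) := by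
  classical
  set e : X1 → (X2 → ℝ) → ℝ :=
    fun x1 P => ent (fun y1 => ∑ x2, P x2 * W1 x1 x2 y1) with he
  set G : (X2 → ℝ) → ℝ := fun P => ∑ x1, Pstar x1 * e x1 P with hGdef
  have hcont : Continuous G := by
    apply continuous_finset_sum
    intro x1 _
    exact continuous_const.mul (ent_mix_continuous W1 x1)
  obtain ⟨x0⟩ := ‹Nonempty X2›
  have hne : (stdSimplex ℝ X2).Nonempty := by
    refine ⟨fun x => if x = x0 then 1 else 0, fun x => ?_, ?_⟩
    · dsimp only; split <;> norm_num
    · simp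
  obtain ⟨Pstar2, hP2mem, hmax'⟩ :=
    (isCompact_stdSimplex ℝ X2).exists_isMaxOn hne hcont.continuousOn
  have hmax : ∀ y ∈ stdSimplex ℝ X2, G y ≤ G Pstar2 := fun y hy => hmax' hy
  have hP2dist : IsDist Pstar2 := ⟨hP2mem.1, hP2mem.2⟩
  refine ⟨Pstar2, hP2dist, ?_⟩
  intro x1 P hP
  set c : X1 → X2 → ℝ := fun x1' => if x1' = x1 then P else Pstar2 with hc
  have hcsum : ∀ x1', ∑ x2, c x1' x2 = 1 := by
    intro x1'
    by_cases h : x1' = x1 <;> simp [hc, h, hP.2, hP2dist.2]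
  set Q : X1 → X2 → ℝ := fun x1' x2 => Pstar x1' * c x1' x2 with hQ
  have hQdist : IsJointDist Q := by
    constructor
    · intro a b
      refine mul_nonneg (hpos a).le ?_
      by_cases h : a = x1 <;> simp [hc, h, hP.1 b, hP2dist.1 b]
    · have hs : ∀ x1', ∑ x2, Q x1' x2 = Pstar x1' := by
        intro x1'
        simp only [hQ]
        rw [← Finset.mul_sum, hcsum x1', mul_one]
      calc ∑ a, ∑ b, Q a b = ∑ a, Pstar a := Finset.sum_congr rfl fun a _ => hs a
        _ = 1 := ha.1.2
  -- marginal of Q on X2 is a distribution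
  have hm2nonneg : ∀ b, 0 ≤ margin2 Q b := by
    intro b
    exact Finset.sum_nonneg fun a _ => hQdist.1 a b
  have hm2sum : ∑ b, margin2 Q b = 1 := by
    unfold margin2
    rw [Finset.sum_comm]
    exact hQdist.2
  have hm2mem : margin2 Q ∈ stdSimplex ℝ X2 := ⟨hm2nonneg, hm2sum⟩
  -- compute condEntY1X1 of Q and of the product
  have hposne : ∀ a, Pstar a ≠ 0 := fun a => (hpos a).ne'
  have hEQ : condEntY1X1 Q W1 = ∑ a, Pstar a * e a (c a) :=
    condEntY1X1_factored W1 Pstar hposne c hcsum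
  have hER : condEntY1X1 (fun a b => Pstar a * margin2 Q b) W1 = G (margin2 Q) :=
    condEntY1X1_factored W1 Pstar hposne (fun _ b => margin2 Q b) fun _ => hm2sum
  have hchain : ∑ a, Pstar a * e a (c a) ≤ ∑ a, Pstar a * e a Pstar2 := by
    calc ∑ a, Pstar a * e a (c a) = condEntY1X1 Q W1 := hEQ.symm
      _ ≤ condEntY1X1 (fun a b => Pstar a * margin2 Q b) W1 := hb2ii Q hQdist
      _ = G (margin2 Q) := hER
      _ ≤ G Pstar2 := hmax _ hm2mem
      _ = ∑ a, Pstar a * e a Pstar2 := rfl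
  -- peel off the x1 term
  rw [← Finset.add_sum_erase _ (fun a => Pstar a * e a (c a)) (Finset.mem_univ x1),
      ← Finset.add_sum_erase _ (fun a => Pstar a * e a Pstar2) (Finset.mem_univ x1)]
      at hchain
  have hrest : ∑ a ∈ Finset.univ.erase x1, Pstar a * e a (c a) =
      ∑ a ∈ Finset.univ.erase x1, Pstar a * e a Pstar2 := by
    refine Finset.sum_congr rfl fun a haa => ?_
    have hane : a ≠ x1 := Finset.ne_of_mem_erase haa
    simp [hc, hane]
  rw [hrest] at hchain
  have hx1 : Pstar x1 * e x1 (c x1) ≤ Pstar x1 * e x1 Pstar2 :=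
    le_of_add_le_add_right hchain
  have hcx1 : c x1 = P := by simp [hc]
  rw [hcx1] at hx1
  exact le_of_mul_le_mul_left hx1 (hpos x1)

end TWC
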